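/- arXiv:2409.17248 — 2 statements merged into one kernel-verified Lean document; each statement's English description precedes it below -/
import Mathlib

section
/- Assume the fourth-moment asymptotic for ζ: there are κ ∈ (0,1), a real polynomial P of degree 4, and C₀ > 0 such that |(1/T)·∫_0^T |ζ(1/2+iu)|⁴ du − P(log T)| ≤ C₀·T^{−κ} for all T ≥ 2. Then there is a constant C₁ > 0 (depending only on κ, P, C₀) such that for all t ≥ 10 and all η with 2/t < η < 1: ∫_0^{1/η} |ζ(1/2+i(t−r))|²·|ζ(1/2+i(t+r))|² dr ≤ C₁·((log t)⁴/η + t^{1−κ}). -/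
open MeasureTheory intervalIntegral

private lemma polyBound' (Q : Polynomial ℝ) (hQ : Q.natDegree ≤ 4) (y : ℝ) (hy : 0 ≤ y) :
    |Q.eval y| ≤ (∑ i ∈ Finset.range 5, |Q.coeff i|) * max 1 y ^ 4 := by
  rw [Polynomial.eval_eq_sum_range' (lt_of_le_of_lt hQ (by norm_num : (4:ℕ) < 5)),
    Finset.sum_mul]
  refine (Finset.abs_sum_le_sum_abs _ _).trans (Finset.sum_le_sum fun i hi => ?_)
  rw [abs_mul]
  refine mul_le_mul_of_nonneg_left ?_ (abs_nonneg _)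
  rw [abs_pow, abs_of_nonneg hy]
  calc y ^ i ≤ max 1 y ^ i := pow_le_pow_left₀ hy (le_max_right 1 y) i
    _ ≤ max 1 y ^ 4 := pow_le_pow_right₀ (le_max_left 1 y) (by
        simpa using Nat.lt_succ_iff.mp (Finset.mem_range.mp hi))

private lemma hasDerivAt_f' (P : Polynomial ℝ) (x : ℝ) (hx : 0 < x) :
    HasDerivAt (fun T => T * P.eval (Real.log T))
      ((P + Polynomial.derivative P).eval (Real.log x)) x := by
  have h1 : HasDerivAt Real.log x⁻¹ x := Real.hasDerivAt_log (ne_of_gt hx)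
  have h2 : HasDerivAt (fun T => P.eval (Real.log T))
      ((Polynomial.derivative P).eval (Real.log x) * x⁻¹) x :=
    (P.hasDerivAt (Real.log x)).comp x h1
  have h3 : HasDerivAt (fun T => T * P.eval (Real.log T))
      (1 * P.eval (Real.log x) + x * ((Polynomial.derivative P).eval (Real.log x) * x⁻¹)) x :=
    (hasDerivAt_id x).mul h2
  convert h3 using 1
  simp only [Polynomial.eval_add, id_eq]
  field_simp

private lemma zetaCont' : Continuous (fun u : ℝ => ‖riemannZeta (1/2 + Complex.I * u)‖) := by
  have h : Continuous (fun u : ℝ => (1/2 + Complex.I * u : ℂ)) := by continuity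
  refine (continuous_iff_continuousAt.2 fun u => ?_).norm
  refine (differentiableAt_riemannZeta ?_).continuousAt.comp h.continuousAt
  intro hc
  have := congrArg Complex.re hc
  simp at this


private lemma zetaContSub' (t : ℝ) :
    Continuous (fun r : ℝ => ‖riemannZeta (1/2 + Complex.I * (t - r))‖) := by
  have h : Continuous (fun r : ℝ => (1/2 + Complex.I * (t - r) : ℂ)) := by continuity
  refine (continuous_iff_continuousAt.2 fun u => ?_).norm
  refine (differentiableAt_riemannZeta ?_).continuousAt.comp h.continuousAt
  intro hc
  have := congrArg Complex.re hc
  simp at this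

private lemma zetaContAdd' (t : ℝ) :
    Continuous (fun r : ℝ => ‖riemannZeta (1/2 + Complex.I * (t + r))‖) := by
  have h : Continuous (fun r : ℝ => (1/2 + Complex.I * (t + r) : ℂ)) := by continuity
  refine (continuous_iff_continuousAt.2 fun u => ?_).norm
  refine (differentiableAt_riemannZeta ?_).continuousAt.comp h.continuousAt
  intro hc
  have := congrArg Complex.re hc
  simp at this

private lemma momentBounds (κ : ℝ) (P : Polynomial ℝ) (C₀ : ℝ)
    (hmom : ∀ T : ℝ, 2 ≤ T →
      |(1 / T) * (∫ u in (0:ℝ)..T, ‖riemannZeta (1/2 + Complex.I * u)‖ ^ 4) -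
          P.eval (Real.log T)| ≤ C₀ * T ^ (-κ))
    (T : ℝ) (hT : 2 ≤ T) :
    (∫ u in (0:ℝ)..T, ‖riemannZeta (1/2 + Complex.I * u)‖ ^ 4)
      ≤ T * P.eval (Real.log T) + C₀ * T ^ (1 - κ) ∧
    T * P.eval (Real.log T) - C₀ * T ^ (1 - κ)
      ≤ (∫ u in (0:ℝ)..T, ‖riemannZeta (1/2 + Complex.I * u)‖ ^ 4) := by
  have hT0 : (0:ℝ) < T := by linarith
  have hrw : T * (C₀ * T ^ (-κ)) = C₀ * T ^ (1 - κ) := by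
    rw [show (1 - κ) = 1 + -κ by ring, Real.rpow_add hT0, Real.rpow_one]; ring
  have h := abs_sub_le_iff.mp (hmom T hT)
  set I := (∫ u in (0:ℝ)..T, ‖riemannZeta (1/2 + Complex.I * u)‖ ^ 4) with hI
  have e1 := mul_le_mul_of_nonneg_left h.1 hT0.le
  have e2 := mul_le_mul_of_nonneg_left h.2 hT0.le
  rw [mul_sub, show T * (1/T * I) = I by field_simp] at e1
  rw [mul_sub, show T * (1/T * I) = I by field_simp] at e2
  constructor <;> linarith

set_option maxHeartbeats 1000000 in
theorem stmt6 (κ : ℝ) (hκ : κ ∈ Set.Ioo (0:ℝ) 1) (P : Polynomial ℝ) (hP : P.degree = 4)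
    (C₀ : ℝ) (hC₀ : 0 < C₀)
    (hmom : ∀ T : ℝ, 2 ≤ T →
      |(1 / T) * (∫ u in (0:ℝ)..T, ‖riemannZeta (1/2 + Complex.I * u)‖ ^ 4) -
          P.eval (Real.log T)| ≤ C₀ * T ^ (-κ)) :
    ∃ C₁ > (0:ℝ), ∀ t : ℝ, 10 ≤ t → ∀ η : ℝ, 2 / t < η → η < 1 →
      (∫ r in (0:ℝ)..(1/η),
          ‖riemannZeta (1/2 + Complex.I * (t - r))‖ ^ 2 *
            ‖riemannZeta (1/2 + Complex.I * (t + r))‖ ^ 2) ≤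
        C₁ * ((Real.log t) ^ 4 / η + t ^ (1 - κ)) := by
  obtain ⟨hκ0, hκ1⟩ := hκ
  have hgc : Continuous (fun u : ℝ => ‖riemannZeta (1/2 + Complex.I * u)‖ ^ 4) :=
    zetaCont'.pow 4
  set Q := P + Polynomial.derivative P with hQdef
  have hPnd : P.natDegree = 4 := Polynomial.natDegree_eq_of_degree_eq_some hP
  have hQdeg : Q.natDegree ≤ 4 := by
    refine (Polynomial.natDegree_add_le _ _).trans (max_le (le_of_eq hPnd) ?_)
    exact (Polynomial.natDegree_derivative_le P).trans (by simp [hPnd])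
  set K := ∑ i ∈ Finset.range 5, |Q.coeff i| with hKdef
  have hK : 0 ≤ K := Finset.sum_nonneg fun i _ => abs_nonneg _
  refine ⟨16*K + 2*C₀, by positivity, ?_⟩
  intro t ht η hη1 hη2
  have ht0 : (0:ℝ) < t := by linarith
  have hη0 : 0 < η := lt_trans (by positivity) hη1
  set δ := 1/η with hδdef
  have hδ0 : 0 < δ := by positivity
  have hδt : δ < t/2 := by
    rw [div_lt_iff₀ ht0] at hη1
    rw [hδdef, div_lt_div_iff₀ hη0 two_pos]
    nlinarith
  have ha2 : 2 ≤ t - δ := by linarith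
  have hb2 : 2 ≤ t + δ := by linarith
  have hlogt : 1 ≤ Real.log t := by
    rw [show (1:ℝ) = Real.log (Real.exp 1) by simp]
    exact Real.log_le_log (Real.exp_pos 1) (by linarith [Real.exp_one_lt_d9])
  have hlogt0 : 0 ≤ Real.log t := by linarith
  -- integrability
  have hc1 : Continuous (fun r : ℝ => ‖riemannZeta (1/2 + Complex.I * (t - r))‖ ^ 4) :=
    (zetaContSub' t).pow 4
  have hc2 : Continuous (fun r : ℝ => ‖riemannZeta (1/2 + Complex.I * (t + r))‖ ^ 4) :=
    (zetaContAdd' t).pow 4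
  have hch : Continuous (fun r : ℝ => ‖riemannZeta (1/2 + Complex.I * (t - r))‖ ^ 2 *
      ‖riemannZeta (1/2 + Complex.I * (t + r))‖ ^ 2) :=
    ((zetaContSub' t).pow 2).mul ((zetaContAdd' t).pow 2)
  -- Step 1: AM-GM pointwise
  have step1 : (∫ r in (0:ℝ)..δ,
        ‖riemannZeta (1/2 + Complex.I * (t - r))‖ ^ 2 *
          ‖riemannZeta (1/2 + Complex.I * (t + r))‖ ^ 2) ≤
      ∫ r in (0:ℝ)..δ,
        (‖riemannZeta (1/2 + Complex.I * (t - r))‖ ^ 4 +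
          ‖riemannZeta (1/2 + Complex.I * (t + r))‖ ^ 4) / 2 := by
    refine integral_mono_on hδ0.le (hch.intervalIntegrable _ _)
      (((hc1.add hc2).div_const 2).intervalIntegrable _ _) (fun r _ => ?_)
    set a := ‖riemannZeta (1/2 + Complex.I * (t - r))‖
    set b := ‖riemannZeta (1/2 + Complex.I * (t + r))‖
    nlinarith [sq_nonneg (a^2 - b^2), sq_nonneg a, sq_nonneg b]
  -- Step 2: substitution
  have step2 : (∫ r in (0:ℝ)..δ,
        (‖riemannZeta (1/2 + Complex.I * (t - r))‖ ^ 4 +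
          ‖riemannZeta (1/2 + Complex.I * (t + r))‖ ^ 4) / 2) =
      ((∫ u in (t-δ)..t, ‖riemannZeta (1/2 + Complex.I * u)‖ ^ 4) +
        (∫ u in t..(t+δ), ‖riemannZeta (1/2 + Complex.I * u)‖ ^ 4)) / 2 := by
    rw [intervalIntegral.integral_div, integral_add ((hc1.intervalIntegrable _ _))
      ((hc2.intervalIntegrable _ _))]
    congr 1
    have h1 := integral_comp_sub_left (a := (0:ℝ)) (b := δ)
      (fun u => ‖riemannZeta (1/2 + Complex.I * u)‖ ^ 4) t
    have h2 := integral_comp_add_left (a := (0:ℝ)) (b := δ)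
      (fun u => ‖riemannZeta (1/2 + Complex.I * u)‖ ^ 4) t
    rw [sub_zero] at h1
    rw [add_zero] at h2
    push_cast at h1 h2 ⊢
    rw [h1, h2]
  have step3 : (∫ u in (t-δ)..t, ‖riemannZeta (1/2 + Complex.I * u)‖ ^ 4) +
      (∫ u in t..(t+δ), ‖riemannZeta (1/2 + Complex.I * u)‖ ^ 4) =
      ∫ u in (t-δ)..(t+δ), ‖riemannZeta (1/2 + Complex.I * u)‖ ^ 4 :=
    integral_add_adjacent_intervals (hgc.intervalIntegrable _ _) (hgc.intervalIntegrable _ _)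
  -- Step 3: split from 0 and apply moment bounds
  have hsplit : (∫ u in (t-δ)..(t+δ), ‖riemannZeta (1/2 + Complex.I * u)‖ ^ 4) =
      (∫ u in (0:ℝ)..(t+δ), ‖riemannZeta (1/2 + Complex.I * u)‖ ^ 4) -
      (∫ u in (0:ℝ)..(t-δ), ‖riemannZeta (1/2 + Complex.I * u)‖ ^ 4) := by
    have := integral_add_adjacent_intervals (μ := volume) (a := (0:ℝ)) (b := t-δ) (c := t+δ)
      (hgc.intervalIntegrable _ _) (hgc.intervalIntegrable _ _)
    linarith
  have mU := (momentBounds κ P C₀ hmom (t+δ) hb2).1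
  have mL := (momentBounds κ P C₀ hmom (t-δ) ha2).2
  -- Step 4: MVT bound on T * P(log T)
  have mvt : (t+δ) * P.eval (Real.log (t+δ)) - (t-δ) * P.eval (Real.log (t-δ)) ≤
      (16 * K * (Real.log t)^4) * (2*δ) := by
    have hder : ∀ x ∈ Set.Icc (t-δ) (t+δ),
        HasDerivWithinAt (fun T => T * P.eval (Real.log T)) (Q.eval (Real.log x))
          (Set.Icc (t-δ) (t+δ)) x := fun x hx =>
      (hasDerivAt_f' P x (by have := hx.1; linarith)).hasDerivWithinAt
    have hbound : ∀ x ∈ Set.Icc (t-δ) (t+δ), ‖Q.eval (Real.log x)‖ ≤ 16 * K * (Real.log t)^4 := by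
      intro x hx
      have hx0 : (2:ℝ) ≤ x := le_trans ha2 hx.1
      have hlx0 : 0 ≤ Real.log x := Real.log_nonneg (by linarith)
      have hlx : Real.log x ≤ 2 * Real.log t := by
        have h1 : Real.log x ≤ Real.log (2*t) := Real.log_le_log (by linarith) (by
          have := hx.2; linarith)
        have h2 : Real.log (2*t) = Real.log 2 + Real.log t :=
          Real.log_mul (by norm_num) (ne_of_gt ht0)
        have h3 : Real.log 2 ≤ 1 := by
          rw [show (1:ℝ) = Real.log (Real.exp 1) by simp]
          exact Real.log_le_log two_pos (by linarith [Real.exp_one_gt_d9])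
        linarith
      have hmax : max 1 (Real.log x) ≤ 2 * Real.log t := max_le (by linarith) hlx
      calc ‖Q.eval (Real.log x)‖ = |Q.eval (Real.log x)| := rfl
        _ ≤ K * max 1 (Real.log x) ^ 4 := polyBound' Q hQdeg _ hlx0
        _ ≤ K * (2 * Real.log t) ^ 4 := by
            refine mul_le_mul_of_nonneg_left ?_ hK
            exact pow_le_pow_left₀ (le_trans zero_le_one (le_max_left _ _)) hmax 4
        _ = 16 * K * (Real.log t)^4 := by ring
    have key := Convex.norm_image_sub_le_of_norm_hasDerivWithin_le hder hbound
      (convex_Icc _ _) (Set.left_mem_Icc.2 (by linarith)) (Set.right_mem_Icc.2 (by linarith))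
    have habs : ‖(t+δ) - (t-δ)‖ = 2*δ := by
      rw [Real.norm_eq_abs, abs_of_nonneg (by linarith)]; ring
    rw [habs] at key
    calc (t+δ) * P.eval (Real.log (t+δ)) - (t-δ) * P.eval (Real.log (t-δ)) ≤
        ‖(t+δ) * P.eval (Real.log (t+δ)) - (t-δ) * P.eval (Real.log (t-δ))‖ :=
          le_abs_self _
      _ ≤ (16 * K * (Real.log t)^4) * (2*δ) := key
  -- Step 5: error terms
  have hpow0 : (0:ℝ) ≤ t ^ (1-κ) := Real.rpow_nonneg ht0.le _
  have e1 : (t+δ) ^ (1-κ) ≤ 2 * t ^ (1-κ) := by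
    calc (t+δ) ^ (1-κ) ≤ (2*t) ^ (1-κ) :=
          Real.rpow_le_rpow (by linarith) (by linarith) (by linarith)
      _ = 2 ^ (1-κ) * t ^ (1-κ) := Real.mul_rpow (by norm_num) ht0.le
      _ ≤ 2 * t ^ (1-κ) := by
          refine mul_le_mul_of_nonneg_right ?_ hpow0
          calc (2:ℝ) ^ (1-κ) ≤ 2 ^ (1:ℝ) :=
                Real.rpow_le_rpow_of_exponent_le one_le_two (by linarith)
            _ = 2 := Real.rpow_one 2
  have e2 : (t-δ) ^ (1-κ) ≤ t ^ (1-κ) :=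
    Real.rpow_le_rpow (by linarith) (by linarith) (by linarith)
  -- assemble
  have hfin : (Real.log t)^4 / η = (Real.log t)^4 * δ := by
    rw [hδdef]; ring
  rw [hfin]
  have hδnn : 0 ≤ (Real.log t)^4 * δ := by positivity
  calc (∫ r in (0:ℝ)..δ,
          ‖riemannZeta (1/2 + Complex.I * (t - r))‖ ^ 2 *
            ‖riemannZeta (1/2 + Complex.I * (t + r))‖ ^ 2)
      ≤ ((∫ u in (t-δ)..t, ‖riemannZeta (1/2 + Complex.I * u)‖ ^ 4) +
          (∫ u in t..(t+δ), ‖riemannZeta (1/2 + Complex.I * u)‖ ^ 4)) / 2 := by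
        rw [← step2]; exact step1
    _ = (∫ u in (t-δ)..(t+δ), ‖riemannZeta (1/2 + Complex.I * u)‖ ^ 4) / 2 := by
        rw [step3]
    _ ≤ ((16 * K * (Real.log t)^4) * (2*δ) + C₀ * (2 * t ^ (1-κ)) + C₀ * t ^ (1-κ)) / 2 := by
        rw [hsplit]
        have := mul_le_mul_of_nonneg_left e1 hC₀.le
        have := mul_le_mul_of_nonneg_left e2 hC₀.le
        linarith
    _ ≤ (16*K + 2*C₀) * ((Real.log t)^4 * δ + t ^ (1-κ)) := by nlinarith
end

section
/- Assume the fourth-moment asymptotic for ζ: there are κ ∈ (0,1), a real polynomial P of degree 4, and C₀ > 0 such that |(1/T)·∫_0^T |ζ(1/2+iu)|⁴ du − P(log T)| ≤ C₀·T^{−κ} for all T ≥ 2. Then there is a constant C > 0 (depending only on κ, P, C₀) such that for all t ≥ 10: ∫_0^1 |ζ(1/2+ir)|²·|ζ(1/2+i(2t−r))|² dr ≤ C·t^{1/2}·(log t)². -/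
open MeasureTheory intervalIntegral

theorem stmt8 (κ : ℝ) (hκ : κ ∈ Set.Ioo (0:ℝ) 1) (P : Polynomial ℝ) (hP : P.degree = 4)
    (C₀ : ℝ) (hC₀ : 0 < C₀)
    (hmom : ∀ T : ℝ, 2 ≤ T →
      |(1 / T) * (∫ u in (0:ℝ)..T, ‖riemannZeta (1/2 + Complex.I * u)‖ ^ 4) -
          P.eval (Real.log T)| ≤ C₀ * T ^ (-κ)) :
    ∃ C > (0:ℝ), ∀ t : ℝ, 10 ≤ t →
      (∫ r in (0:ℝ)..1,
          ‖riemannZeta (1/2 + Complex.I * r)‖ ^ 2 *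
            ‖riemannZeta (1/2 + Complex.I * (2 * t - r))‖ ^ 2) ≤
        C * Real.sqrt t * (Real.log t) ^ 2 := by
  -- basic functions
  set f : ℝ → ℝ := fun u => ‖riemannZeta (1/2 + Complex.I * u)‖ ^ 2 with hfdef
  set g : ℝ → ℝ := fun u => f u ^ 2 with hgdef
  have hne : ∀ u : ℝ, (1/2 + Complex.I * u : ℂ) ≠ 1 := by
    intro u h
    have := congrArg Complex.re h
    simp at this
  have hfc : Continuous f := by
    have h1 : Continuous fun u : ℝ => (1/2 + Complex.I * u : ℂ) := by continuity
    have h2 : Continuous fun u : ℝ => riemannZeta (1/2 + Complex.I * u) := by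
      rw [continuous_iff_continuousAt]
      intro u
      exact ContinuousAt.comp (g := riemannZeta)
        (differentiableAt_riemannZeta (hne u)).continuousAt h1.continuousAt
    exact (h2.norm).pow 2
  have hgc : Continuous g := hfc.pow 2
  have hg0 : ∀ u, 0 ≤ g u := fun u => sq_nonneg _
  have hgint : ∀ a b : ℝ, IntervalIntegrable g volume a b := fun a b =>
    hgc.intervalIntegrable a b
  -- g equals the fourth power
  have hg4 : ∀ T : ℝ, (∫ u in (0:ℝ)..T, ‖riemannZeta (1/2 + Complex.I * u)‖ ^ 4)
      = ∫ u in (0:ℝ)..T, g u := by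
    intro T
    apply intervalIntegral.integral_congr
    intro u _
    simp only [hgdef, hfdef]
    ring
  -- moment bound
  have hmom' : ∀ T : ℝ, 2 ≤ T → (∫ u in (0:ℝ)..T, g u)
      ≤ T * (|P.eval (Real.log T)| + C₀) := by
    intro T hT
    have hT0 : (0:ℝ) < T := by linarith
    have h1 : (T:ℝ) ^ (-κ) ≤ 1 := by
      apply Real.rpow_le_one_of_one_le_of_nonpos (by linarith)
      linarith [hκ.1]
    have := hmom T hT
    rw [abs_sub_le_iff] at this
    have h2 : (1 / T) * (∫ u in (0:ℝ)..T, g u) ≤ |P.eval (Real.log T)| + C₀ := by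
      rw [← hg4]
      have := this.1
      have hC : C₀ * T ^ (-κ) ≤ C₀ := by nlinarith
      have := le_abs_self (P.eval (Real.log T))
      linarith
    calc (∫ u in (0:ℝ)..T, g u) = T * ((1/T) * (∫ u in (0:ℝ)..T, g u)) := by
          field_simp
      _ ≤ T * (|P.eval (Real.log T)| + C₀) := by
          apply mul_le_mul_of_nonneg_left h2 hT0.le
  -- polynomial bound
  set A : ℝ := ∑ i ∈ Finset.range 5, |P.coeff i| with hAdef
  have hA0 : 0 ≤ A := Finset.sum_nonneg fun i _ => abs_nonneg _
  have hApoly : ∀ x : ℝ, 1 ≤ x → |P.eval x| ≤ A * x ^ 4 := by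
    intro x hx
    have hx0 : (0:ℝ) ≤ x := by linarith
    have hnd : P.natDegree = 4 := Polynomial.natDegree_eq_of_degree_eq_some hP
    rw [Polynomial.eval_eq_sum_range, hnd]
    calc |∑ i ∈ Finset.range 5, P.coeff i * x ^ i|
        ≤ ∑ i ∈ Finset.range 5, |P.coeff i * x ^ i| := Finset.abs_sum_le_sum_abs _ _
      _ ≤ ∑ i ∈ Finset.range 5, |P.coeff i| * x ^ 4 := by
          apply Finset.sum_le_sum
          intro i hi
          rw [abs_mul, abs_pow, abs_of_nonneg hx0]
          apply mul_le_mul_of_nonneg_left _ (abs_nonneg _)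
          have hi4 : i ≤ 4 := by
            have := Finset.mem_range.mp hi
            omega
          exact pow_le_pow_right₀ hx hi4
      _ = A * x ^ 4 := by rw [hAdef, Finset.sum_mul]
  -- the constant
  set M : ℝ := 2 * (|P.eval (Real.log 2)| + C₀) with hMdef
  refine ⟨M / 2 + (16 * A + C₀), by positivity, ?_⟩
  intro t ht
  -- basic facts about t
  have ht0 : (0:ℝ) < t := by linarith
  set L : ℝ := Real.log t with hLdef
  have hL1 : 1 ≤ L := by
    have : Real.exp 1 < t := by
      have := Real.exp_one_lt_d9
      linarith
    have := (Real.lt_log_iff_exp_lt ht0).mpr this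
    linarith
  set s : ℝ := Real.sqrt t with hsdef
  have hs0 : 0 < s := Real.sqrt_pos.mpr ht0
  have hss : s * s = t := Real.mul_self_sqrt ht0.le
  set l : ℝ := s * L ^ 2 with hldef
  have hl0 : 0 < l := by positivity
  -- pointwise AM-GM
  have key : ∀ a b : ℝ, a * b ≤ (l / 2) * a ^ 2 + (1 / (2 * l)) * b ^ 2 := by
    intro a b
    rw [← mul_le_mul_iff_right₀ (by positivity : (0:ℝ) < 2 * l)]
    have heq : 2 * l * ((l / 2) * a ^ 2 + (1 / (2 * l)) * b ^ 2)
        = l ^ 2 * a ^ 2 + b ^ 2 := by field_simp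
    rw [heq]
    nlinarith [sq_nonneg (l * a - b)]
  -- integrability of the pieces
  have hcomp : Continuous fun r : ℝ => f (2 * t - r) := hfc.comp (by continuity)
  have hint1 : IntervalIntegrable (fun r => f r * f (2 * t - r)) volume 0 1 :=
    (hfc.mul hcomp).intervalIntegrable 0 1
  have hint2 : IntervalIntegrable
      (fun r => (l / 2) * f r ^ 2 + (1 / (2 * l)) * f (2 * t - r) ^ 2) volume 0 1 := by
    apply IntervalIntegrable.add
    · exact (continuous_const.mul (hfc.pow 2)).intervalIntegrable 0 1
    · exact (continuous_const.mul (hcomp.pow 2)).intervalIntegrable 0 1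
  -- step 1 : AM-GM under the integral
  have step1 : (∫ r in (0:ℝ)..1, f r * f (2 * t - r))
      ≤ ∫ r in (0:ℝ)..1, ((l / 2) * f r ^ 2 + (1 / (2 * l)) * f (2 * t - r) ^ 2) := by
    apply intervalIntegral.integral_mono_on (by norm_num) hint1 hint2
    intro r _
    exact key _ _
  -- split the integral
  have step2 : (∫ r in (0:ℝ)..1, ((l / 2) * f r ^ 2 + (1 / (2 * l)) * f (2 * t - r) ^ 2))
      = (l / 2) * (∫ r in (0:ℝ)..1, g r)
        + (1 / (2 * l)) * (∫ r in (0:ℝ)..1, g (2 * t - r)) := by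
    rw [intervalIntegral.integral_add (f := fun r => (l / 2) * f r ^ 2)
      (g := fun r => (1 / (2 * l)) * f (2 * t - r) ^ 2) ((continuous_const.mul (hfc.pow 2)).intervalIntegrable 0 1)
      ((continuous_const.mul (hcomp.pow 2)).intervalIntegrable 0 1),
      intervalIntegral.integral_const_mul, intervalIntegral.integral_const_mul]
  -- bound ∫_0^1 g
  have bound1 : (∫ r in (0:ℝ)..1, g r) ≤ M := by
    have h12 : (∫ r in (0:ℝ)..1, g r) ≤ ∫ r in (0:ℝ)..2, g r := by
      rw [← intervalIntegral.integral_add_adjacent_intervals (hgint 0 1) (hgint 1 2)]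
      have : 0 ≤ ∫ r in (1:ℝ)..2, g r :=
        intervalIntegral.integral_nonneg (by norm_num) (fun u _ => hg0 u)
      linarith
    have := hmom' 2 le_rfl
    rw [hMdef]
    linarith
  -- bound ∫_0^1 g(2t - r)
  have bound2 : (∫ r in (0:ℝ)..1, g (2 * t - r)) ≤ 2 * t * L ^ 4 * (16 * A + C₀) := by
    have hsub : (∫ r in (0:ℝ)..1, g (2 * t - r))
        = ∫ u in (2 * t - 1)..(2 * t - 0), g u :=
      intervalIntegral.integral_comp_sub_left g (2 * t)
    rw [hsub]
    have hmono : (∫ u in (2 * t - 1)..(2 * t - 0), g u) ≤ ∫ u in (0:ℝ)..(2 * t), g u := by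
      rw [show (2 * t - 0 : ℝ) = 2 * t by ring,
        ← intervalIntegral.integral_add_adjacent_intervals (hgint 0 (2 * t - 1))
          (hgint (2 * t - 1) (2 * t))]
      have : 0 ≤ ∫ u in (0:ℝ)..(2 * t - 1), g u :=
        intervalIntegral.integral_nonneg (by linarith) (fun u _ => hg0 u)
      linarith
    have hT2 : (2:ℝ) ≤ 2 * t := by linarith
    have hmain := hmom' (2 * t) hT2
    -- log (2t) bounds
    have hlog2t : Real.log (2 * t) ≤ 2 * L := by
      rw [Real.log_mul (by norm_num) (by positivity), hLdef]
      have h2t : Real.log 2 ≤ Real.log t := Real.log_le_log (by norm_num) (by linarith)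
      linarith
    have hlog2t1 : 1 ≤ Real.log (2 * t) := by
      have : Real.log t ≤ Real.log (2 * t) := Real.log_le_log ht0 (by linarith)
      linarith
    have hPb : |P.eval (Real.log (2 * t))| ≤ 16 * A * L ^ 4 := by
      calc |P.eval (Real.log (2 * t))| ≤ A * Real.log (2 * t) ^ 4 :=
            hApoly _ hlog2t1
        _ ≤ A * (2 * L) ^ 4 := by
            apply mul_le_mul_of_nonneg_left _ hA0
            apply pow_le_pow_left₀ (by linarith) hlog2t
        _ = 16 * A * L ^ 4 := by ring
    have hL4 : (1:ℝ) ≤ L ^ 4 := one_le_pow₀ hL1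
    have hC0L : C₀ ≤ C₀ * L ^ 4 := le_mul_of_one_le_right hC₀.le hL4
    calc (∫ u in (2 * t - 1)..(2 * t - 0), g u) ≤ ∫ u in (0:ℝ)..(2 * t), g u := hmono
      _ ≤ 2 * t * (|P.eval (Real.log (2 * t))| + C₀) := hmain
      _ ≤ 2 * t * (16 * A * L ^ 4 + C₀ * L ^ 4) := by
            apply mul_le_mul_of_nonneg_left (add_le_add hPb hC0L) (by linarith)
      _ = 2 * t * L ^ 4 * (16 * A + C₀) := by ring
  -- put everything together
  have hM0 : 0 ≤ M := by positivity
  have final : (l / 2) * (∫ r in (0:ℝ)..1, g r)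
      + (1 / (2 * l)) * (∫ r in (0:ℝ)..1, g (2 * t - r))
      ≤ (M / 2 + (16 * A + C₀)) * s * L ^ 2 := by
    have h1 : (l / 2) * (∫ r in (0:ℝ)..1, g r) ≤ (l / 2) * M :=
      mul_le_mul_of_nonneg_left bound1 (by positivity)
    have h2 : (1 / (2 * l)) * (∫ r in (0:ℝ)..1, g (2 * t - r))
        ≤ (1 / (2 * l)) * (2 * t * L ^ 4 * (16 * A + C₀)) :=
      mul_le_mul_of_nonneg_left bound2 (by positivity)
    have e1 : (l / 2) * M = (M / 2) * s * L ^ 2 := by rw [hldef]; ring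
    have e2 : (1 / (2 * l)) * (2 * t * L ^ 4 * (16 * A + C₀))
        = (16 * A + C₀) * s * L ^ 2 := by
      rw [hldef, ← hss]
      have hLne : L ≠ 0 := by linarith
      field_simp
    rw [e1] at h1; rw [e2] at h2
    have : (M / 2) * s * L ^ 2 + (16 * A + C₀) * s * L ^ 2
        = (M / 2 + (16 * A + C₀)) * s * L ^ 2 := by ring
    linarith
  calc (∫ r in (0:ℝ)..1,
          ‖riemannZeta (1/2 + Complex.I * r)‖ ^ 2 *
            ‖riemannZeta (1/2 + Complex.I * (2 * t - r))‖ ^ 2)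
      = ∫ r in (0:ℝ)..1, f r * f (2 * t - r) := by
        apply intervalIntegral.integral_congr
        intro r _
        simp only [hfdef]
        norm_num
    _ ≤ ∫ r in (0:ℝ)..1, ((l / 2) * f r ^ 2 + (1 / (2 * l)) * f (2 * t - r) ^ 2) := step1
    _ = (l / 2) * (∫ r in (0:ℝ)..1, g r)
        + (1 / (2 * l)) * (∫ r in (0:ℝ)..1, g (2 * t - r)) := step2
    _ ≤ (M / 2 + (16 * A + C₀)) * s * L ^ 2 := final
end
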